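/- For every integer n ≥ 2, Σ_{j=1}^{n} Σ_{k=1}^{j} bel_{k,λ} · S_{2,λ}(j,k) · S_{2,λ}(n,j) = 0, and bel_{1,λ} = 1. -/

import Mathlib

open PowerSeries Finset

noncomputable section

/-- Composition of formal power series (the standard composition when the inner
series `f` has zero constant term, since then `coeff n (f ^ k) = 0` for `k > n`). -/
def pcomp {R : Type*} [CommRing R] (g f : PowerSeries R) : PowerSeries R :=
  PowerSeries.mk fun n =>
    ∑ k ∈ Finset.range (n + 1), PowerSeries.coeff k g * PowerSeries.coeff n (f ^ k)

/-- The formal power series `log(1+t)` over `ℚ`. -/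
def Lq : PowerSeries ℚ := PowerSeries.mk fun n => if n = 0 then 0 else (-1) ^ (n + 1) / n

/-- The formal power series `-log(1-t)` over `ℚ`. -/
def Labs : PowerSeries ℚ := PowerSeries.mk fun n => if n = 0 then 0 else 1 / n

/-- Signed Stirling numbers of the first kind: `(log(1+t))^k / k! = Σ S₁(n,k) tⁿ/n!`. -/
def S1 (n k : ℕ) : ℚ := n.factorial / k.factorial * PowerSeries.coeff n (Lq ^ k)

/-- Unsigned Stirling numbers of the first kind: `(-log(1-t))^k / k! = Σ |s(n,k)| tⁿ/n!`. -/
def uS1 (n k : ℕ) : ℚ := n.factorial / k.factorial * PowerSeries.coeff n (Labs ^ k)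

/-- Stirling numbers of the second kind: `(eᵗ-1)^k / k! = Σ S₂(n,k) tⁿ/n!`. -/
def S2 (n k : ℕ) : ℚ :=
  n.factorial / k.factorial * PowerSeries.coeff n ((PowerSeries.exp ℚ - 1) ^ k)

/-- `λ^(n-1) * (1)_{n,1/λ} = ∏_{j=1}^{n-1} (λ - j)`. -/
def dc (l : ℚ) (n : ℕ) : ℚ := ∏ j ∈ Finset.Ico 1 n, (l - j)

/-- Degenerate falling factorial `(1)_{n,λ} = ∏_{j=0}^{n-1} (1 - jλ)`. -/
def ffac (l : ℚ) (n : ℕ) : ℚ := ∏ j ∈ Finset.range n, (1 - j * l)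

/-- Degenerate logarithm `log_λ(1+t) = Σ_{n≥1} λ^{n-1}(1)_{n,1/λ} tⁿ/n!`. -/
def Ld (l : ℚ) : PowerSeries ℚ :=
  PowerSeries.mk fun n => if n = 0 then 0 else dc l n / n.factorial

/-- Degenerate exponential `e_λ(t) = Σ_{n≥0} (1)_{n,λ} tⁿ/n!`. -/
def Ed (l : ℚ) : PowerSeries ℚ := PowerSeries.mk fun n => ffac l n / n.factorial

/-- Degenerate Stirling numbers of the first kind. -/
def S1d (l : ℚ) (n k : ℕ) : ℚ :=
  n.factorial / k.factorial * PowerSeries.coeff n (Ld l ^ k)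

/-- Degenerate Stirling numbers of the second kind. -/
def S2d (l : ℚ) (n k : ℕ) : ℚ :=
  n.factorial / k.factorial * PowerSeries.coeff n ((Ed l - 1) ^ k)

/-- Bell numbers of the second kind: `log(1 + log(1+t)) = Σ_{n≥1} bel_n tⁿ/n!`. -/
def belNum (n : ℕ) : ℚ := n.factorial * PowerSeries.coeff n (pcomp Lq Lq)

/-- Bell numbers of the second kind via the explicit formula. -/
def belN (m : ℕ) : ℚ :=
  ∑ k ∈ Finset.Icc 1 m, (-1) ^ (k - 1) * (k - 1).factorial * S1 m k

/-- Bell polynomials of the second kind. -/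
def belPoly (n : ℕ) : Polynomial ℚ :=
  ∑ k ∈ Finset.Icc 1 n,
    Polynomial.C ((-1) ^ (k - 1) * (k - 1).factorial * S1 n k) * Polynomial.X ^ k

/-- Bell polynomials of the second kind evaluated at `x : ℚ`. -/
def belVal (x : ℚ) (m : ℕ) : ℚ :=
  ∑ k ∈ Finset.Icc 1 m, (-1) ^ (k - 1) * (k - 1).factorial * S1 m k * x ^ k

/-- Degenerate Bell numbers of the second kind via generating function. -/
def belNumD (l : ℚ) (n : ℕ) : ℚ := n.factorial * PowerSeries.coeff n (pcomp (Ld l) (Ld l))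

/-- Degenerate Bell numbers of the second kind via the explicit formula. -/
def belND (l : ℚ) (m : ℕ) : ℚ := ∑ j ∈ Finset.Icc 1 m, dc l j * S1d l m j

/-- Degenerate Bell polynomials of the second kind. -/
def belPolyD (l : ℚ) (n : ℕ) : Polynomial ℚ :=
  ∑ k ∈ Finset.Icc 1 n, Polynomial.C (dc l k * S1d l n k) * Polynomial.X ^ k

/-- `log(1+t)` as a power series over `ℚ[x]`. -/
def LqP : PowerSeries (Polynomial ℚ) :=
  PowerSeries.mk fun n => if n = 0 then 0 else Polynomial.C ((-1) ^ (n + 1) / n : ℚ)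

/-- `-log(1-t)` as a power series over `ℚ[x]`. -/
def LabsP : PowerSeries (Polynomial ℚ) :=
  PowerSeries.mk fun n => if n = 0 then 0 else Polynomial.C (1 / n : ℚ)

/-- `log(1-t)` as a power series over `ℚ[x]`. -/
def MP : PowerSeries (Polynomial ℚ) :=
  PowerSeries.mk fun n => if n = 0 then 0 else Polynomial.C (-(1 / n) : ℚ)

/-- `log_λ(1+t)` as a power series over `ℚ[x]`. -/
def LdP (l : ℚ) : PowerSeries (Polynomial ℚ) :=
  PowerSeries.mk fun n => if n = 0 then 0 else Polynomial.C (dc l n / n.factorial)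

/-- The polylogarithm `Li_k(y) = Σ_{m≥1} yᵐ/mᵏ` as a power series over `ℚ[x]`. -/
def LiP (k : ℤ) : PowerSeries (Polynomial ℚ) :=
  PowerSeries.mk fun m => if m = 0 then 0 else Polynomial.C (((m : ℚ) ^ k)⁻¹)

/-- The degenerate polylogarithm `Li_{k,λ}` as a power series over `ℚ[x]`. -/
def LidP (l : ℚ) (k : ℤ) : PowerSeries (Polynomial ℚ) :=
  PowerSeries.mk fun m => if m = 0 then 0 else
    Polynomial.C ((-1) ^ (m - 1) * dc l m / ((m - 1).factorial * (m : ℚ) ^ k))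

/-- `-x · log(1-t)` over `ℚ[x]`. -/
def innerP : PowerSeries (Polynomial ℚ) := PowerSeries.C (Polynomial.X : Polynomial ℚ) * LabsP

/-- `-x · log_λ(1-t)` over `ℚ[x]`. -/
def innerD (l : ℚ) : PowerSeries (Polynomial ℚ) :=
  PowerSeries.C (Polynomial.X : Polynomial ℚ) *
    PowerSeries.mk fun n => if n = 0 then 0 else
      Polynomial.C ((-1) ^ (n + 1) * dc l n / n.factorial)

/-- Poly-Bell polynomials of the second kind via generating function. -/
def polyBellP (k : ℤ) (n : ℕ) : Polynomial ℚ :=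
  (n.factorial : ℚ) • PowerSeries.coeff n (pcomp (LiP k) innerP)

/-- Poly-Bell polynomials of the second kind via the explicit formula. -/
def belPk (k : ℤ) (n : ℕ) : Polynomial ℚ :=
  ∑ l ∈ Finset.Icc 1 n,
    Polynomial.C ((((l : ℚ) ^ (k - 1))⁻¹) * (l - 1).factorial * uS1 n l) * Polynomial.X ^ l

/-- Degenerate poly-Bell polynomials of the second kind via generating function. -/
def belDPk (l : ℚ) (k : ℤ) (n : ℕ) : Polynomial ℚ :=
  (n.factorial : ℚ) • PowerSeries.coeff n (pcomp (LidP l k) (innerD l))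

/-- Degenerate poly-Bell polynomials of the second kind via the explicit formula. -/
def belE (l : ℚ) (k : ℤ) (m : ℕ) : Polynomial ℚ :=
  (-1 : Polynomial ℚ) ^ (m - 1) *
    ∑ j ∈ Finset.Icc 1 m,
      Polynomial.C ((((j : ℚ) ^ (k - 1))⁻¹) * dc l j * S1d l m j) * Polynomial.X ^ j


-- coeff of power vanishes below the order
lemma coeff_pow_zero_of_lt {f : ℚ⟦X⟧} (hf : constantCoeff f = 0) :
    ∀ k n : ℕ, n < k → coeff n (f ^ k) = 0 := by
  intro k
  induction k with
  | zero => intro n h; omega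
  | succ k ih =>
    intro n h
    rw [pow_succ, coeff_mul]
    apply Finset.sum_eq_zero
    rintro ⟨p, q⟩ hpq
    rw [Finset.HasAntidiagonal.mem_antidiagonal] at hpq
    rcases lt_or_ge p k with hp | hp
    · simp [ih p hp]
    · have hq : q = 0 := by omega
      subst hq
      simp [coeff_zero_eq_constantCoeff, hf]


lemma coeff_pcomp (g f : ℚ⟦X⟧) (n : ℕ) :
    coeff n (pcomp g f) = ∑ k ∈ range (n + 1), coeff k g * coeff n (f ^ k) :=
  coeff_mk _ _

-- extend the truncated sum to any larger range
lemma coeff_pcomp_of_le {f : ℚ⟦X⟧} (hf : constantCoeff f = 0) (g : ℚ⟦X⟧) {n m : ℕ}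
    (h : n + 1 ≤ m) :
    coeff n (pcomp g f) = ∑ k ∈ range m, coeff k g * coeff n (f ^ k) := by
  rw [coeff_pcomp]
  apply Finset.sum_subset (by intro k hk; simp_all; omega)
  intro k hk hk2
  simp only [mem_range] at hk hk2
  rw [coeff_pow_zero_of_lt hf k n (by omega), mul_zero]

lemma pcomp_add (g h f : ℚ⟦X⟧) : pcomp (g + h) f = pcomp g f + pcomp h f := by
  ext n
  simp [coeff_pcomp, add_mul, Finset.sum_add_distrib]

lemma pcomp_smul (a : ℚ) (g f : ℚ⟦X⟧) : pcomp (a • g) f = a • pcomp g f := by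
  ext n
  simp [coeff_pcomp, Finset.mul_sum, mul_assoc]

lemma pcomp_one (f : ℚ⟦X⟧) : pcomp 1 f = 1 := by
  ext n
  rw [coeff_pcomp]
  rw [Finset.sum_eq_single 0]
  · simp
  · intro k hk hk0; simp [coeff_one, hk0]
  · simp

lemma pcomp_X {f : ℚ⟦X⟧} (hf : constantCoeff f = 0) : pcomp X f = f := by
  ext n
  rw [coeff_pcomp]
  rw [Finset.sum_eq_single 1]
  · simp
  · intro k hk hk1; simp [coeff_X, hk1]
  · intro h
    simp only [mem_range, not_lt] at h
    have hn : n = 0 := by omega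
    subst hn
    simp [coeff_zero_eq_constantCoeff, hf]

lemma triangle_sum (n : ℕ) (F : ℕ → ℕ → ℚ) (hF : ∀ a b, n < a + b → F a b = 0) :
    ∑ k ∈ range (n + 1), ∑ p ∈ Finset.HasAntidiagonal.antidiagonal k, F p.1 p.2
      = ∑ a ∈ range (n + 1), ∑ b ∈ range (n + 1), F a b := by
  rw [← Finset.sum_product']
  rw [Finset.sum_sigma' (range (n + 1)) (fun k => Finset.HasAntidiagonal.antidiagonal k)
    (fun _ p => F p.1 p.2)]
  rw [show (∑ p ∈ range (n+1) ×ˢ range (n+1), F p.1 p.2)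
      = ∑ p ∈ (range (n+1) ×ˢ range (n+1)).filter (fun p => p.1 + p.2 ≤ n), F p.1 p.2 by
    refine (Finset.sum_subset (Finset.filter_subset _ _) ?_).symm
    intro x hx hnx
    simp only [Finset.mem_filter, hx, true_and, not_le] at hnx
    exact hF _ _ hnx]
  refine Finset.sum_nbij' (fun p => (p.2.1, p.2.2)) (fun p => ⟨p.1 + p.2, p⟩) ?_ ?_ ?_ ?_ ?_
  · rintro ⟨k, a, b⟩ hk
    simp only [Finset.mem_sigma, mem_range, Finset.HasAntidiagonal.mem_antidiagonal] at hk
    simp only [Finset.mem_filter, Finset.mem_product, mem_range]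
    omega
  · rintro ⟨a, b⟩ hab
    simp only [Finset.mem_filter, Finset.mem_product, mem_range] at hab
    refine Finset.mem_sigma.mpr ⟨?_, ?_⟩
    · show a + b ∈ range (n + 1)
      exact mem_range.mpr (by omega)
    · exact Finset.HasAntidiagonal.mem_antidiagonal.mpr rfl
  · rintro ⟨k, a, b⟩ hk
    simp only [Finset.mem_sigma, mem_range, Finset.HasAntidiagonal.mem_antidiagonal] at hk
    simp [hk.2]
  · rintro ⟨a, b⟩ _; rfl
  · rintro ⟨k, a, b⟩ _; rfl

lemma pcomp_mul {f : ℚ⟦X⟧} (hf : constantCoeff f = 0) (g h : ℚ⟦X⟧) :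
    pcomp (g * h) f = pcomp g f * pcomp h f := by
  ext n
  rw [coeff_pcomp_of_le hf _ (le_refl (n+1)), coeff_mul]
  have hL : ∑ k ∈ range (n + 1), coeff k (g * h) * coeff n (f ^ k)
      = ∑ k ∈ range (n + 1), ∑ p ∈ Finset.HasAntidiagonal.antidiagonal k,
          coeff p.1 g * coeff p.2 h * coeff n (f ^ (p.1 + p.2)) := by
    refine Finset.sum_congr rfl fun k _ => ?_
    rw [coeff_mul, Finset.sum_mul]
    refine Finset.sum_congr rfl fun p hp => ?_
    rw [Finset.HasAntidiagonal.mem_antidiagonal] at hp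
    rw [hp]
  rw [hL, triangle_sum n
    (fun a b => coeff a g * coeff b h * coeff n (f ^ (a + b)))
    (fun a b hab => by simp only [coeff_pow_zero_of_lt hf _ _ hab, mul_zero])]
  have hR : ∀ p ∈ Finset.HasAntidiagonal.antidiagonal n,
      coeff p.1 (pcomp g f) * coeff p.2 (pcomp h f)
        = ∑ a ∈ range (n+1), ∑ b ∈ range (n+1),
            (coeff a g * coeff p.1 (f ^ a)) * (coeff b h * coeff p.2 (f ^ b)) := by
    intro p hp
    rw [Finset.HasAntidiagonal.mem_antidiagonal] at hp
    rw [coeff_pcomp_of_le hf g (by omega : p.1 + 1 ≤ n + 1),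
        coeff_pcomp_of_le hf h (by omega : p.2 + 1 ≤ n + 1),
        Finset.sum_mul]
    refine Finset.sum_congr rfl fun a _ => ?_
    rw [Finset.mul_sum]
  have hRR : ∑ p ∈ Finset.HasAntidiagonal.antidiagonal n, ∑ a ∈ range (n+1), ∑ b ∈ range (n+1),
        ((coeff a g * coeff p.1 (f ^ a)) * (coeff b h * coeff p.2 (f ^ b)))
      = ∑ a ∈ range (n+1), ∑ b ∈ range (n+1),
        coeff a g * coeff b h * coeff n (f ^ (a + b)) := by
    rw [Finset.sum_comm]
    refine Finset.sum_congr rfl fun a _ => ?_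
    rw [Finset.sum_comm]
    refine Finset.sum_congr rfl fun b _ => ?_
    rw [pow_add, coeff_mul, Finset.mul_sum]
    exact Finset.sum_congr rfl fun p _ => by ring
  rw [Finset.sum_congr rfl hR, hRR]

lemma pcomp_pow {f : ℚ⟦X⟧} (hf : constantCoeff f = 0) (g : ℚ⟦X⟧) (i : ℕ) :
    pcomp (g ^ i) f = (pcomp g f) ^ i := by
  induction i with
  | zero => simpa using pcomp_one f
  | succ i ih => rw [pow_succ, pow_succ, pcomp_mul hf, ih]


lemma dc_one (l : ℚ) : dc l 1 = 1 := by simp [dc]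

lemma dc_succ (l : ℚ) {n : ℕ} (hn : 1 ≤ n) : dc l (n + 1) = dc l n * (l - n) := by
  rw [dc, dc, Finset.prod_Ico_succ_top hn]

lemma ffac_succ (l : ℚ) (n : ℕ) : ffac l (n + 1) = ffac l n * (1 - n * l) := by
  rw [ffac, ffac, Finset.prod_range_succ]

lemma constantCoeff_Ld (l : ℚ) : constantCoeff (Ld l) = 0 := by
  rw [← coeff_zero_eq_constantCoeff, Ld, coeff_mk]; simp

lemma constantCoeff_EdSub (l : ℚ) : constantCoeff (Ed l - 1) = 0 := by
  rw [← coeff_zero_eq_constantCoeff]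
  simp [Ed, coeff_mk, ffac]

lemma EdODE (l : ℚ) : (1 + l • (X : ℚ⟦X⟧)) * d⁄dX ℚ (Ed l) = Ed l := by
  ext n
  rw [add_mul, one_mul, map_add, smul_mul_assoc, map_smul]
  cases n with
  | zero =>
    simp only [coeff_zero_eq_constantCoeff, map_mul, constantCoeff_X, mul_zero, zero_mul,
      smul_zero]
    have h1 : constantCoeff (d⁄dX ℚ (Ed l)) = coeff 1 (Ed l) * 1 := by
      rw [← coeff_zero_eq_constantCoeff, coeff_derivative]; norm_num
    rw [h1]
    simp [Ed, coeff_mk, ffac]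
  | succ n =>
    rw [coeff_derivative, coeff_succ_X_mul, coeff_derivative]
    simp only [Ed, coeff_mk, smul_eq_mul]
    rw [ffac_succ l (n + 1), Nat.factorial_succ (n + 1), Nat.factorial_succ n]
    push_cast
    have h1 : ((n : ℚ) + 1) ≠ 0 := by positivity
    have h2 : ((n : ℚ) + 2) ≠ 0 := by positivity
    have h3 : ((n.factorial : ℚ)) ≠ 0 := Nat.cast_ne_zero.mpr n.factorial_ne_zero
    field_simp
    ring

lemma LdODE (l : ℚ) : (1 + (X : ℚ⟦X⟧)) * d⁄dX ℚ (Ld l) = l • Ld l + 1 := by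
  ext n
  rw [add_mul, one_mul, map_add, map_add, map_smul]
  cases n with
  | zero =>
    simp only [coeff_zero_eq_constantCoeff, map_mul, constantCoeff_X, mul_zero,
      constantCoeff_one]
    have h1 : constantCoeff (d⁄dX ℚ (Ld l)) = coeff 1 (Ld l) * 1 := by
      rw [← coeff_zero_eq_constantCoeff, coeff_derivative]; norm_num
    rw [h1, constantCoeff_Ld]
    simp [Ld, coeff_mk, dc_one]
  | succ n =>
    rw [coeff_derivative, coeff_succ_X_mul, coeff_derivative, coeff_one]
    simp only [Ld, coeff_mk, smul_eq_mul, Nat.succ_ne_zero, if_false, Nat.add_eq_zero,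
      and_false, one_ne_zero]
    rw [dc_succ l (by omega : 1 ≤ n + 1), Nat.factorial_succ (n + 1), Nat.factorial_succ n]
    push_cast
    have h1 : ((n : ℚ) + 1) ≠ 0 := by positivity
    have h2 : ((n : ℚ) + 2) ≠ 0 := by positivity
    have h3 : ((n.factorial : ℚ)) ≠ 0 := Nat.cast_ne_zero.mpr n.factorial_ne_zero
    field_simp
    ring

lemma pcomp_deriv {f : ℚ⟦X⟧} (hf : constantCoeff f = 0) (g : ℚ⟦X⟧) :
    d⁄dX ℚ (pcomp g f) = d⁄dX ℚ f * pcomp (d⁄dX ℚ g) f := by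
  ext n
  rw [coeff_derivative, coeff_pcomp_of_le hf g (by omega : (n + 1) + 1 ≤ n + 2), coeff_mul]
  have hR : ∀ p ∈ Finset.HasAntidiagonal.antidiagonal n,
      coeff p.1 (d⁄dX ℚ f) * coeff p.2 (pcomp (d⁄dX ℚ g) f)
        = ∑ j ∈ range (n + 1),
            coeff (j + 1) g * ((j : ℚ) + 1) * (coeff p.1 (d⁄dX ℚ f) * coeff p.2 (f ^ j)) := by
    intro p hp
    rw [Finset.HasAntidiagonal.mem_antidiagonal] at hp
    rw [coeff_pcomp_of_le hf _ (by omega : p.2 + 1 ≤ n + 1), Finset.mul_sum]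
    refine Finset.sum_congr rfl fun j _ => ?_
    rw [coeff_derivative g j]
    ring
  rw [Finset.sum_congr rfl hR, Finset.sum_comm]
  have key : ∀ j : ℕ, ((j : ℚ) + 1) * coeff n (f ^ j * d⁄dX ℚ f)
      = coeff (n + 1) (f ^ (j + 1)) * ((n : ℚ) + 1) := by
    intro j
    have h1 := coeff_derivative (f ^ (j + 1)) n
    rw [Derivation.leibniz_pow] at h1
    simp only [Nat.add_sub_cancel, smul_eq_mul] at h1
    rw [map_nsmul, nsmul_eq_mul] at h1
    push_cast at h1
    rw [← h1]
  have hstep : ∀ j ∈ range (n + 1),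
      (∑ p ∈ Finset.HasAntidiagonal.antidiagonal n,
        coeff (j + 1) g * ((j : ℚ) + 1) * (coeff p.1 (d⁄dX ℚ f) * coeff p.2 (f ^ j)))
        = coeff (j + 1) g * (coeff (n + 1) (f ^ (j + 1)) * ((n : ℚ) + 1)) := by
    intro j _
    rw [← Finset.mul_sum, ← coeff_mul, mul_comm (d⁄dX ℚ f) (f ^ j), mul_assoc, key j]
  rw [Finset.sum_congr rfl hstep]
  rw [Finset.sum_range_succ' (fun k => coeff k g * coeff (n + 1) (f ^ k)) (n + 1)]
  simp only [pow_zero, coeff_one, Nat.succ_ne_zero, if_false, mul_zero, add_zero]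
  rw [Finset.sum_mul]
  exact Finset.sum_congr rfl fun j _ => by ring

lemma EdSub_eq (l : ℚ) : Ed l = 1 + (Ed l - 1) := by ring

lemma keyODE (l : ℚ) :
    (1 + l • (X : ℚ⟦X⟧)) * d⁄dX ℚ (pcomp (Ld l) (Ed l - 1)) =
      l • pcomp (Ld l) (Ed l - 1) + 1 := by
  have hf := constantCoeff_EdSub l
  have hchain := pcomp_deriv hf (Ld l)
  have hPhi : (1 + (Ed l - 1)) * pcomp (d⁄dX ℚ (Ld l)) (Ed l - 1)
      = l • pcomp (Ld l) (Ed l - 1) + 1 := by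
    have h := congrArg (fun g => pcomp g (Ed l - 1)) (LdODE l)
    rw [pcomp_mul hf, pcomp_add, pcomp_one, pcomp_X hf, pcomp_add, pcomp_smul, pcomp_one] at h
    exact h
  have hEdD : d⁄dX ℚ (Ed l - 1) = d⁄dX ℚ (Ed l) := by
    rw [map_sub]
    simp
  calc (1 + l • (X : ℚ⟦X⟧)) * d⁄dX ℚ (pcomp (Ld l) (Ed l - 1))
      = ((1 + l • X) * d⁄dX ℚ (Ed l)) * pcomp (d⁄dX ℚ (Ld l)) (Ed l - 1) := by
        rw [hchain, hEdD]; ring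
    _ = Ed l * pcomp (d⁄dX ℚ (Ld l)) (Ed l - 1) := by rw [EdODE]
    _ = (1 + (Ed l - 1)) * pcomp (d⁄dX ℚ (Ld l)) (Ed l - 1) := by rw [← EdSub_eq]
    _ = l • pcomp (Ld l) (Ed l - 1) + 1 := hPhi

lemma coeff_pcompLd (l : ℚ) (n : ℕ) :
    coeff n (pcomp (Ld l) (Ed l - 1)) = if n = 1 then 1 else 0 := by
  induction n with
  | zero =>
    rw [coeff_pcomp]
    simp [Ld, coeff_mk]
  | succ n ih =>
    have h := congrArg (coeff n) (keyODE l)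
    rw [add_mul, one_mul, map_add, map_add, map_smul, smul_mul_assoc, map_smul,
      coeff_derivative] at h
    cases n with
    | zero =>
      rw [coeff_zero_eq_constantCoeff] at ih
      simp only [coeff_zero_eq_constantCoeff, map_mul, constantCoeff_X, zero_mul, smul_zero, constantCoeff_one,
        smul_eq_mul, ih, if_neg (by norm_num : (0:ℕ) ≠ 1)] at h
      push_cast at h
      simp only [mul_zero, zero_add, mul_one, add_zero] at h
      rw [if_pos rfl]
      linarith
    | succ m =>
      rw [coeff_succ_X_mul, coeff_derivative, coeff_one, ih] at h
      simp only [Nat.succ_ne_zero, if_false, add_zero, smul_eq_mul] at h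
      rcases eq_or_ne m 0 with hm | hm
      · subst hm
        norm_num at h
        rw [if_neg (by norm_num : (2:ℕ) ≠ 1)]
        linarith
      · rw [if_neg (by omega : m + 1 ≠ 1)] at h
        simp only [mul_zero, zero_mul, zero_add, mul_one] at h
        rw [if_neg (by omega : m + 2 ≠ 1)]
        have hm2 : ((m : ℚ) + 1 + 1) ≠ 0 := by positivity
        have := h
        field_simp at this ⊢
        rw [add_zero] at this
        rcases mul_eq_zero.mp this with h' | h'
        · exact h'
        · exact absurd h' (by push_cast at hm2 ⊢; exact hm2)

lemma pcompLd_eq_X (l : ℚ) : pcomp (Ld l) (Ed l - 1) = X := by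
  ext n
  rw [coeff_pcompLd, coeff_X]

lemma ortho (l : ℚ) (i n : ℕ) :
    ∑ k ∈ range (n + 1), coeff k ((Ld l) ^ i) * coeff n ((Ed l - 1) ^ k)
      = coeff n ((X : ℚ⟦X⟧) ^ i) := by
  rw [← coeff_pcomp, pcomp_pow (constantCoeff_EdSub l), pcompLd_eq_X]


lemma range_succ_eq_insert (n : ℕ) : range (n + 1) = insert 0 (Finset.Icc 1 n) := by
  ext k; simp [mem_range, Finset.mem_Icc]; omega

lemma orthoS (l : ℚ) {i : ℕ} (hi : 1 ≤ i) (n : ℕ) :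
    ∑ k ∈ Finset.Icc 1 n, S2d l n k * S1d l k i
      = (n.factorial : ℚ) / i.factorial * coeff n ((X : ℚ⟦X⟧) ^ i) := by
  have hterm : ∀ k ∈ Finset.Icc 1 n, S2d l n k * S1d l k i
      = (n.factorial : ℚ) / i.factorial *
          (coeff k (Ld l ^ i) * coeff n ((Ed l - 1) ^ k)) := by
    intro k hk
    rw [S2d, S1d]
    have h1 : (k.factorial : ℚ) ≠ 0 := Nat.cast_ne_zero.mpr k.factorial_ne_zero
    field_simp
  rw [Finset.sum_congr rfl hterm, ← Finset.mul_sum]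
  congr 1
  rw [← ortho l i n, range_succ_eq_insert, Finset.sum_insert (by simp)]
  have h0 : coeff 0 (Ld l ^ i) = 0 := by
    rw [coeff_zero_eq_constantCoeff, map_pow, constantCoeff_Ld, zero_pow (by omega)]
  rw [h0, zero_mul, zero_add]

lemma step2 (l : ℚ) {j : ℕ} (hj : 1 ≤ j) :
    ∑ k ∈ Finset.Icc 1 j, belND l k * S2d l j k = dc l j := by
  have h1 : ∀ k ∈ Finset.Icc 1 j, belND l k * S2d l j k
      = ∑ i ∈ Finset.Icc 1 j, dc l i * (S2d l j k * S1d l k i) := by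
    intro k hk
    rw [Finset.mem_Icc] at hk
    rw [belND, Finset.sum_mul]
    rw [Finset.sum_subset (Finset.Icc_subset_Icc_right hk.2)]
    · exact Finset.sum_congr rfl fun i _ => by ring
    · intro i hij hik
      rw [Finset.mem_Icc] at hij hik
      have hki : k < i := by omega
      have : coeff k (Ld l ^ i) = 0 :=
        coeff_pow_zero_of_lt (constantCoeff_Ld l) i k hki
      simp [S1d, this]
  rw [Finset.sum_congr rfl h1, Finset.sum_comm]
  have h2 : ∀ i ∈ Finset.Icc 1 j, ∑ k ∈ Finset.Icc 1 j, dc l i * (S2d l j k * S1d l k i)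
      = dc l i * ((j.factorial : ℚ) / i.factorial * coeff j ((X : ℚ⟦X⟧) ^ i)) := by
    intro i hi
    rw [Finset.mem_Icc] at hi
    rw [← Finset.mul_sum, orthoS l hi.1 j]
  rw [Finset.sum_congr rfl h2]
  rw [Finset.sum_eq_single j]
  · rw [coeff_X_pow, if_pos rfl]
    have : (j.factorial : ℚ) ≠ 0 := Nat.cast_ne_zero.mpr j.factorial_ne_zero
    field_simp
  · intro i hij hik
    rw [coeff_X_pow, if_neg (fun h => hik h.symm), mul_zero, mul_zero]
  · intro h
    exact absurd (Finset.mem_Icc.mpr ⟨hj, le_refl j⟩) h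

lemma S1d_one (l : ℚ) {j : ℕ} (hj : 1 ≤ j) : S1d l j 1 = dc l j := by
  rw [S1d, pow_one, Ld, coeff_mk, if_neg (by omega : j ≠ 0)]
  have : (j.factorial : ℚ) ≠ 0 := Nat.cast_ne_zero.mpr j.factorial_ne_zero
  field_simp
  simp

theorem stmt11 (l : ℚ) (n : ℕ) (hn : 2 ≤ n) :
    (∑ j ∈ Finset.Icc 1 n, ∑ k ∈ Finset.Icc 1 j, belND l k * S2d l j k * S2d l n j) = 0 ∧
      belND l 1 = 1 := by
  constructor
  · have h1 : ∀ j ∈ Finset.Icc 1 n,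
        (∑ k ∈ Finset.Icc 1 j, belND l k * S2d l j k * S2d l n j)
          = S2d l n j * S1d l j 1 := by
      intro j hj
      rw [Finset.mem_Icc] at hj
      rw [← Finset.sum_mul, step2 l hj.1, S1d_one l hj.1]
      ring
    rw [Finset.sum_congr rfl h1, orthoS l (le_refl 1) n, coeff_X_pow,
      if_neg (by omega : n ≠ 1), mul_zero]
  · rw [belND]
    rw [show Finset.Icc 1 1 = {1} by rfl, Finset.sum_singleton]
    rw [S1d_one l (le_refl 1), dc_one]
    norm_num


end
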